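/- arXiv:2507.02421 — 2 statements merged into one kernel-verified Lean document; each statement's English description precedes it below -/
import Mathlib

section
/- Let G be a finite simple graph on at least 2 vertices that is not a path (i.e., G is not isomorphic to the path graph P_n for any n). Then there exists a subset L_G ⊆ V(G) such that the graft (G, L_G) has a local complementation minor (G', L_{G'}) in which G' has at least two isolated vertices, neither of which belongs to L_{G'}. -/
open scoped Classical symmDiff

/-- Local complementation of a simple graph at a vertex `v`: toggle the adjacency
between every pair of distinct neighbours of `v`. -/
def SimpleGraph.localComp {V : Type*} (G : SimpleGraph V) (v : V) : SimpleGraph V where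
  Adj u w := u ≠ w ∧ (Xor' (G.Adj u w) (G.Adj v u ∧ G.Adj v w))
  symm := by
    refine ⟨?_⟩
    rintro u w ⟨h1, h2⟩
    refine ⟨h1.symm, ?_⟩
    rw [G.adj_comm w u, and_comm]
    exact h2
  loopless := ⟨fun u h => h.1 rfl⟩

/-- Local complementation deletion `G ⊟ v`, keeping the ambient vertex type
(the deleted vertex becomes isolated). -/
def SimpleGraph.lcdel {V : Type*} (G : SimpleGraph V) (v : V) : SimpleGraph V where
  Adj u w := u ≠ v ∧ w ≠ v ∧ (G.localComp v).Adj u w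
  symm := ⟨fun u w h => ⟨h.2.1, h.1, (G.localComp v).symm.symm _ _ h.2.2⟩⟩
  loopless := ⟨fun u h => (G.localComp v).loopless.irrefl u h.2.2⟩

/-- A graft: a simple graph whose edges lie inside a finite support, together with
a marked set of vertices `L ⊆ support`. -/
structure Graft (V : Type*) where
  support : Finset V
  G : SimpleGraph V
  edge_mem : ∀ ⦃u w : V⦄, G.Adj u w → u ∈ support
  L : Finset V
  L_sub : L ⊆ support

variable {V : Type*} [Fintype V] [DecidableEq V]

/-- Local complementation deletion of a graft at a vertex:
`(G, L) ⊟ v = (G ⊟ v, (L \ {v}) ∆ N_G(v))`. -/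
noncomputable def Graft.lcd (Γ : Graft V) (v : V) : Graft V where
  support := Γ.support.erase v
  G := Γ.G.lcdel v
  edge_mem := by
    intro u w h
    obtain ⟨hu, hw, hne, hx⟩ := (h : u ≠ v ∧ w ≠ v ∧ u ≠ w ∧
      Xor' (Γ.G.Adj u w) (Γ.G.Adj v u ∧ Γ.G.Adj v w))
    refine Finset.mem_erase.mpr ⟨hu, ?_⟩
    rcases (hx : (Γ.G.Adj u w ∧ ¬(Γ.G.Adj v u ∧ Γ.G.Adj v w)) ∨
        ((Γ.G.Adj v u ∧ Γ.G.Adj v w) ∧ ¬Γ.G.Adj u w)) with ⟨ha, -⟩ | ⟨⟨hv1, -⟩, -⟩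
    · exact Γ.edge_mem ha
    · exact Γ.edge_mem (Γ.G.symm.symm _ _ hv1)
  L := (Γ.L.erase v) ∆ (Finset.univ.filter fun u => Γ.G.Adj v u)
  L_sub := by
    intro u hu
    rw [Finset.mem_symmDiff] at hu
    refine Finset.mem_erase.mpr ?_
    rcases hu with ⟨h1, -⟩ | ⟨h2, -⟩
    · exact ⟨(Finset.mem_erase.mp h1).1, Γ.L_sub (Finset.mem_erase.mp h1).2⟩
    · have hadj : Γ.G.Adj v u := (Finset.mem_filter.mp h2).2
      exact ⟨fun h => Γ.G.loopless.irrefl v (h ▸ hadj), Γ.edge_mem (Γ.G.symm.symm _ _ hadj)⟩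

/-- `Δ` is a local complementation minor of `Γ`: it is obtained from `Γ` by a
finite sequence of local complementation deletions, each performed at a vertex
of the current mark set. -/
inductive Graft.IsLCMinor : Graft V → Graft V → Prop
  | refl (Γ : Graft V) : Graft.IsLCMinor Γ Γ
  | step {Γ Δ : Graft V} (v : V) (hv : v ∈ Γ.L) :
      Graft.IsLCMinor (Γ.lcd v) Δ → Graft.IsLCMinor Γ Δ

/-- The adjacency matrix over GF(2) of a graft, indexed by its support. -/
noncomputable def Graft.matrix (Γ : Graft V) :
    Matrix Γ.support Γ.support (ZMod 2) := fun u w =>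
  if (u : V) = (w : V) then (if (u : V) ∈ Γ.L then 1 else 0)
  else (if Γ.G.Adj (u : V) (w : V) then 1 else 0)

/-- The corank over GF(2) of the adjacency matrix of a graft. -/
noncomputable def Graft.corank (Γ : Graft V) : ℕ :=
  Γ.support.card - Γ.matrix.rank

set_option linter.unusedSectionVars false
set_option linter.unusedVariables false
namespace SimpleGraph
variable {V : Type*} [Fintype V] [DecidableEq V]

lemma lcdel_adj (G : SimpleGraph V) (v u w : V) :
    (G.lcdel v).Adj u w ↔ u ≠ v ∧ w ≠ v ∧ u ≠ w ∧
      ((G.Adj u w ∧ ¬(G.Adj v u ∧ G.Adj v w)) ∨ ((G.Adj v u ∧ G.Adj v w) ∧ ¬ G.Adj u w)) := by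
  rfl

lemma lcdel_isolated_self (G : SimpleGraph V) (v : V) : ∀ w, ¬ (G.lcdel v).Adj v w := by
  intro w h; exact h.1 rfl

lemma lcdel_isolated_mono {G : SimpleGraph V} {a : V} (h : ∀ w, ¬ G.Adj a w) (v : V) :
    ∀ w, ¬ (G.lcdel v).Adj a w := by
  intro w hw
  rw [lcdel_adj] at hw
  rcases hw.2.2.2 with ⟨h1, -⟩ | ⟨⟨h1, -⟩, -⟩
  · exact h w h1
  · exact h v h1.symm

lemma lcdel_edge_mem {G : SimpleGraph V} {A : Finset V}
    (hG : ∀ ⦃u w : V⦄, G.Adj u w → u ∈ A) (v : V) :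
    ∀ ⦃u w : V⦄, (G.lcdel v).Adj u w → u ∈ A.erase v := by
  intro u w h
  rw [lcdel_adj] at h
  refine Finset.mem_erase.mpr ⟨h.1, ?_⟩
  rcases h.2.2.2 with ⟨h1, -⟩ | ⟨⟨h1, -⟩, -⟩
  · exact hG h1
  · exact hG h1.symm

/-- A vertex set closed under edges. -/
def Closed (C : Finset V) (G : SimpleGraph V) : Prop :=
  ∀ u w, G.Adj u w → (u ∈ C ↔ w ∈ C)

lemma Closed.lcdel {C : Finset V} {G : SimpleGraph V} (h : Closed C G) (v : V) :
    Closed C (G.lcdel v) := by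
  intro u w hw
  rw [lcdel_adj] at hw
  rcases hw.2.2.2 with ⟨h1, -⟩ | ⟨⟨h1, h2⟩, -⟩
  · exact h u w h1
  · exact (h v u h1).symm.trans (h v w h2)

lemma lcdel_adj_of_not_adj {G : SimpleGraph V} {v u : V} (hvu : ¬ G.Adj v u) (w : V) :
    (G.lcdel v).Adj u w ↔ (G.Adj u w ∧ w ≠ v ∧ u ≠ v) := by
  rw [lcdel_adj]
  constructor
  · rintro ⟨h1, h2, h3, ⟨h4, -⟩ | ⟨⟨h4, -⟩, -⟩⟩
    · exact ⟨h4, h2, h1⟩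
    · exact absurd h4 hvu
  · rintro ⟨h1, h2, h3⟩
    exact ⟨h3, h2, G.ne_of_adj h1, Or.inl ⟨h1, fun hc => hvu hc.1⟩⟩

/-- Fold of local complementation deletions along a list. -/
def fdel (G : SimpleGraph V) : List V → SimpleGraph V
  | [] => G
  | v :: s => fdel (G.lcdel v) s

lemma fdel_isolated_mono {G : SimpleGraph V} {a : V} (h : ∀ w, ¬ G.Adj a w) :
    ∀ s : List V, ∀ w, ¬ (fdel G s).Adj a w := by
  intro s
  induction s generalizing G with
  | nil => exact h
  | cons v t ih => exact ih (lcdel_isolated_mono h v)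

lemma fdel_mem_isolated {G : SimpleGraph V} {s : List V} {v : V} (hv : v ∈ s) :
    ∀ w, ¬ (fdel G s).Adj v w := by
  induction s generalizing G with
  | nil => cases hv
  | cons u t ih =>
    rcases List.mem_cons.mp hv with rfl | hv'
    · exact fdel_isolated_mono (lcdel_isolated_self G v) t
    · exact ih hv'

lemma Closed.fdel {C : Finset V} {G : SimpleGraph V} (h : Closed C G) (s : List V) :
    Closed C (fdel G s) := by
  induction s generalizing G with
  | nil => exact h
  | cons v t ih => exact ih (h.lcdel v)

lemma fdel_edge_mem {G : SimpleGraph V} {A : Finset V}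
    (hG : ∀ ⦃u w : V⦄, G.Adj u w → u ∈ A) (s : List V) :
    ∀ ⦃u w : V⦄, (fdel G s).Adj u w → u ∈ A \ s.toFinset := by
  induction s generalizing G A with
  | nil => intro u w h; simpa using hG h
  | cons v t ih =>
    intro u w h
    have := ih (lcdel_edge_mem hG v) h
    rw [Finset.mem_sdiff, Finset.mem_erase] at this
    simp only [List.toFinset_cons, Finset.mem_sdiff, Finset.mem_insert]
    exact ⟨this.1.2, fun hc => hc.elim (fun h1 => this.1.1 h1) this.2⟩

/-- The key isolation lemma: if `C` is closed, `a ∈ C`, and every other element of `C`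
has been deleted, then `a` is isolated. -/
lemma isolated_of_closed {G : SimpleGraph V} {C : Finset V} {a : V} {s : List V}
    (hC : Closed C G) (ha : a ∈ C) (hdel : ∀ w ∈ C, w ≠ a → w ∈ s) :
    ∀ w, ¬ (fdel G s).Adj a w := by
  intro w hw
  have hwC : w ∈ C := (hC.fdel s a w hw).mp ha
  have hwa : w ≠ a := fun hc => (fdel G s).loopless.irrefl a (hc ▸ hw)
  exact fdel_mem_isolated (hdel w hwC hwa) a hw.symm

end SimpleGraph
section Realize
variable {V : Type*} [Fintype V] [DecidableEq V]
open SimpleGraph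

lemma Graft.ext' {Γ Δ : Graft V} (h1 : Γ.support = Δ.support) (h2 : Γ.G = Δ.G)
    (h3 : Γ.L = Δ.L) : Γ = Δ := by
  cases Γ; cases Δ
  simp only at h1 h2 h3
  subst h1; subst h2; subst h3
  rfl

lemma realize : ∀ (s : List V) (A : Finset V) (G : SimpleGraph V)
    (hG : ∀ ⦃u w : V⦄, G.Adj u w → u ∈ A), s.Nodup → (∀ v ∈ s, v ∈ A) →
    ∃ (L : Finset V) (hL : L ⊆ A) (Δ : Graft V),
      (Graft.mk A G hG L hL).IsLCMinor Δ ∧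
      Δ.support = A \ s.toFinset ∧ Δ.G = fdel G s ∧ Δ.L = ∅ := by
  intro s
  induction s with
  | nil =>
    intro A G hG _ _
    exact ⟨∅, Finset.empty_subset A, Graft.mk A G hG ∅ (Finset.empty_subset A),
      Graft.IsLCMinor.refl _, by simp, rfl, rfl⟩
  | cons v t ih =>
    intro A G hG hnd hmem
    have hvA : v ∈ A := hmem v (List.mem_cons_self)
    have hvt : v ∉ t := (List.nodup_cons.mp hnd).1
    have hmem' : ∀ x ∈ t, x ∈ A.erase v := by
      intro x hx
      exact Finset.mem_erase.mpr ⟨fun hc => hvt (hc ▸ hx), hmem x (List.mem_cons_of_mem v hx)⟩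
    obtain ⟨L₀, hL₀, Δ, hmin, h1, h2, h3⟩ :=
      ih (A.erase v) (G.lcdel v) (lcdel_edge_mem hG v) (List.nodup_cons.mp hnd).2 hmem'
    set N : Finset V := Finset.univ.filter (fun u => G.Adj v u) with hN
    have hvN : v ∉ N := by simp [hN]
    have hvL₀ : v ∉ L₀ := fun hc => (Finset.mem_erase.mp (hL₀ hc)).1 rfl
    have hNA : N ⊆ A := by
      intro x hx
      exact hG ((Finset.mem_filter.mp hx).2.symm)
    have hLsub : (L₀ ∆ N) ∪ {v} ⊆ A := by
      intro x hx
      rcases Finset.mem_union.mp hx with hx | hx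
      · rcases Finset.mem_symmDiff.mp hx with ⟨h, -⟩ | ⟨h, -⟩
        · exact (Finset.erase_subset v A) (hL₀ h)
        · exact hNA h
      · simpa using (Finset.mem_singleton.mp hx) ▸ hvA
    refine ⟨(L₀ ∆ N) ∪ {v}, hLsub, Δ, ?_, ?_, ?_, h3⟩
    · refine Graft.IsLCMinor.step v (by simp) ?_
      have heq : (Graft.mk A G hG ((L₀ ∆ N) ∪ {v}) hLsub).lcd v
          = Graft.mk (A.erase v) (G.lcdel v) (lcdel_edge_mem hG v) L₀ hL₀ := by
        refine Graft.ext' rfl rfl ?_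
        show ((((L₀ ∆ N) ∪ {v}).erase v) ∆ N) = L₀
        have : ((L₀ ∆ N) ∪ {v}).erase v = L₀ ∆ N := by
          have hvnotin : v ∉ L₀ ∆ N := by
            rw [Finset.mem_symmDiff]; rintro (⟨h, -⟩ | ⟨h, -⟩)
            · exact hvL₀ h
            · exact hvN h
          ext x
          simp only [Finset.mem_erase, Finset.mem_union, Finset.mem_singleton]
          constructor
          · rintro ⟨hx, hx' | rfl⟩
            · exact hx'
            · exact absurd rfl hx
          · intro hx
            exact ⟨fun hc => hvnotin (hc ▸ hx), Or.inl hx⟩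
        rw [this, symmDiff_symmDiff_cancel_right]
      rw [heq]
      exact hmin
    · rw [h1]
      ext x
      simp only [Finset.mem_sdiff, Finset.mem_erase, List.toFinset_cons, Finset.mem_insert]
      tauto
    · exact h2
end Realize
section Consec
variable {α : Type*}

/-- `u` and `w` are consecutive entries of the list. -/
def IsConsec : List α → α → α → Prop
  | [] , _, _ => False
  | [_], _, _ => False
  | a :: b :: t, u, w => (u = a ∧ w = b) ∨ (u = b ∧ w = a) ∨ IsConsec (b :: t) u w

lemma isConsec_mem : ∀ {l : List α} {u w : α}, IsConsec l u w → u ∈ l ∧ w ∈ l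
  | [], _, _, h => h.elim
  | [_], _, _, h => h.elim
  | a :: b :: t, u, w, h => by
    rcases h with ⟨rfl, rfl⟩ | ⟨rfl, rfl⟩ | h
    · exact ⟨List.mem_cons_self, List.mem_cons_of_mem _ (List.mem_cons_self)⟩
    · exact ⟨List.mem_cons_of_mem _ (List.mem_cons_self), List.mem_cons_self⟩
    · have := isConsec_mem h
      exact ⟨List.mem_cons_of_mem _ this.1, List.mem_cons_of_mem _ this.2⟩

lemma isConsec_symm : ∀ {l : List α} {u w : α}, IsConsec l u w → IsConsec l w u
  | [], _, _, h => h.elim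
  | [_], _, _, h => h.elim
  | a :: b :: t, u, w, h => by
    rcases h with ⟨rfl, rfl⟩ | ⟨rfl, rfl⟩ | h
    · exact Or.inr (Or.inl ⟨rfl, rfl⟩)
    · exact Or.inl ⟨rfl, rfl⟩
    · exact Or.inr (Or.inr (isConsec_symm h))

lemma isConsec_cons {l : List α} {u w : α} (h : IsConsec l u w) (a : α) :
    IsConsec (a :: l) u w := by
  match l, h with
  | b :: t, h => exact Or.inr (Or.inr h)

lemma isConsec_head : ∀ {t : List α} {a w : α}, a ∉ t → IsConsec (a :: t) a w →
    ∃ b t', t = b :: t' ∧ w = b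
  | [], a, w, _, h => h.elim
  | b :: t', a, w, hnot, h => by
    refine ⟨b, t', rfl, ?_⟩
    rcases h with ⟨-, rfl⟩ | ⟨h1, -⟩ | h
    · rfl
    · exact absurd (h1 ▸ (List.mem_cons_self (a := b) (l := t'))) hnot
    · exact absurd ((isConsec_mem h).1) hnot

lemma isConsec_two_nbrs : ∀ {l : List α}, l.Nodup → ∀ u, ∃ p q, ∀ w,
    IsConsec l u w → w = p ∨ w = q
  | [], _, u => ⟨u, u, fun w h => h.elim⟩
  | [a], _, u => ⟨u, u, fun w h => h.elim⟩
  | a :: b :: t, hnd, u => by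
    by_cases hua : u = a
    · subst hua
      refine ⟨b, b, fun w h => ?_⟩
      obtain ⟨c, t', heq, rfl⟩ := isConsec_head (List.nodup_cons.mp hnd).1 h
      cases heq
      exact Or.inl rfl
    · by_cases hub : u = b
      · rcases t with _ | ⟨c, t'⟩
        · refine ⟨a, a, fun w h => ?_⟩
          rcases h with ⟨h1, -⟩ | ⟨-, rfl⟩ | h
          · exact absurd h1 hua
          · exact Or.inl rfl
          · exact h.elim
        · refine ⟨a, c, fun w h => ?_⟩
          rcases h with ⟨h1, -⟩ | ⟨-, rfl⟩ | h
          · exact absurd h1 hua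
          · exact Or.inl rfl
          · subst hub
            obtain ⟨d, t'', heq, rfl⟩ :=
              isConsec_head ((List.nodup_cons.mp (List.nodup_cons.mp hnd).2).1) h
            cases heq
            exact Or.inr rfl
      · obtain ⟨p, q, hpq⟩ := isConsec_two_nbrs (List.nodup_cons.mp hnd).2 u
        refine ⟨p, q, fun w h => ?_⟩
        rcases h with ⟨h1, -⟩ | ⟨h1, -⟩ | h
        · exact absurd h1 hua
        · exact absurd h1 hub
        · exact hpq w h

lemma isConsec_exists_nbr : ∀ {l : List α} {u : α}, u ∈ l → 2 ≤ l.length →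
    ∃ w, IsConsec l u w
  | [], u, h, _ => absurd h List.not_mem_nil
  | [a], u, _, h2 => by simp at h2
  | a :: b :: t, u, hmem, _ => by
    rcases List.mem_cons.mp hmem with rfl | hmem'
    · exact ⟨b, Or.inl ⟨rfl, rfl⟩⟩
    · rcases List.mem_cons.mp hmem' with rfl | hmem''
      · exact ⟨a, Or.inr (Or.inl ⟨rfl, rfl⟩)⟩
      · rcases t with _ | ⟨c, t'⟩
        · exact absurd hmem'' List.not_mem_nil
        · obtain ⟨w, hw⟩ := isConsec_exists_nbr (List.mem_cons_of_mem b hmem'') (by simp)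
          exact ⟨w, Or.inr (Or.inr hw)⟩

lemma isConsec_iff_get? : ∀ (l : List α) (u w : α), IsConsec l u w ↔
    ∃ i, (l[i]? = some u ∧ l[i+1]? = some w) ∨
         (l[i]? = some w ∧ l[i+1]? = some u)
  | [], u, w => by
    simp [IsConsec]
  | [a], u, w => by
    constructor
    · intro h; exact h.elim
    · rintro ⟨i, ⟨h1, h2⟩ | ⟨h1, h2⟩⟩ <;>
      · rcases i with _ | i <;> simp_all
  | a :: b :: t, u, w => by
    change ((u = a ∧ w = b) ∨ (u = b ∧ w = a) ∨ IsConsec (b :: t) u w) ↔ _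
    rw [isConsec_iff_get? (b :: t) u w]
    constructor
    · rintro (⟨rfl, rfl⟩ | ⟨rfl, rfl⟩ | ⟨i, h⟩)
      · exact ⟨0, Or.inl ⟨rfl, rfl⟩⟩
      · exact ⟨0, Or.inr ⟨rfl, rfl⟩⟩
      · exact ⟨i + 1, h⟩
    · rintro ⟨i, h⟩
      rcases i with _ | i
      · rcases h with ⟨h1, h2⟩ | ⟨h1, h2⟩
        · exact Or.inl ⟨by simpa using h1.symm, by simpa using h2.symm⟩
        · exact Or.inr (Or.inl ⟨by simpa using h2.symm, by simpa using h1.symm⟩)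
      · exact Or.inr (Or.inr ⟨i, h⟩)

end Consec
section Paths
variable {V : Type*} [Fintype V] [DecidableEq V]
open SimpleGraph

/-- Concrete description of "the graph restricted to `A` is a path". -/
def ConcretePath (A : Finset V) (G : SimpleGraph V) : Prop :=
  ∃ l : List V, l.Nodup ∧ l.toFinset = A ∧ ∀ u w, G.Adj u w ↔ IsConsec l u w

/-- Neighbourhood as a finset. -/
noncomputable def nbr (G : SimpleGraph V) (v : V) : Finset V :=
  Finset.univ.filter (fun w => G.Adj v w)

lemma mem_nbr {G : SimpleGraph V} {v w : V} : w ∈ nbr G v ↔ G.Adj v w := by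
  simp [nbr]

lemma not_concretePath_of_isolated {A : Finset V} {G : SimpleGraph V} {a : V}
    (ha : a ∈ A) (hiso : ∀ w, ¬ G.Adj a w) (hcard : 2 ≤ A.card) :
    ¬ ConcretePath A G := by
  rintro ⟨l, hnd, hA, hadj⟩
  have hlen : 2 ≤ l.length := by
    rw [← List.toFinset_card_of_nodup hnd, hA]; exact hcard
  have hal : a ∈ l := by rw [← List.mem_toFinset, hA]; exact ha
  obtain ⟨w, hw⟩ := isConsec_exists_nbr hal hlen
  exact hiso w ((hadj a w).mpr hw)

lemma not_concretePath_of_degree3 {A : Finset V} {G : SimpleGraph V} {a : V}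
    (hd : 3 ≤ (nbr G a).card) : ¬ ConcretePath A G := by
  rintro ⟨l, hnd, hA, hadj⟩
  obtain ⟨p, q, hpq⟩ := isConsec_two_nbrs hnd a
  have hsub : nbr G a ⊆ {p, q} := by
    intro w hw
    rcases hpq w ((hadj a w).mp (mem_nbr.mp hw)) with rfl | rfl <;> simp
  have := Finset.card_le_card hsub
  have h2 : ({p, q} : Finset V).card ≤ 2 := Finset.card_insert_le _ _ |>.trans (by simp)
  omega

lemma not_concretePath_of_min_degree2 {A : Finset V} {G : SimpleGraph V}
    (hne : A.Nonempty) (hd : ∀ v ∈ A, 2 ≤ (nbr G v).card) :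
    ¬ ConcretePath A G := by
  rintro ⟨l, hnd, hA, hadj⟩
  rcases l with _ | ⟨a, t⟩
  · rcases hne with ⟨x, hx⟩
    rw [← hA] at hx
    simp at hx
  · have haA : a ∈ A := by rw [← hA]; simp
    have hat : a ∉ t := (List.nodup_cons.mp hnd).1
    have hsub : ∃ p, nbr G a ⊆ {p} := by
      rcases t with _ | ⟨b, t'⟩
      · refine ⟨a, fun w hw => ?_⟩
        exact ((hadj a w).mp (mem_nbr.mp hw)).elim
      · refine ⟨b, fun w hw => ?_⟩
        obtain ⟨c, t'', heq, rfl⟩ := isConsec_head hat ((hadj a w).mp (mem_nbr.mp hw))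
        cases heq
        simp
    obtain ⟨p, hp⟩ := hsub
    have h1 := (Finset.card_le_card hp).trans_eq (Finset.card_singleton p)
    have h2 := hd a haA
    omega

lemma concretePath_pair {A : Finset V} {G : SimpleGraph V} {a b : V}
    (hA : A = {a, b}) (hab : a ≠ b) (hadj : G.Adj a b)
    (hedge : ∀ ⦃u w : V⦄, G.Adj u w → u ∈ A) : ConcretePath A G := by
  refine ⟨[a, b], by simp [hab], by simp [hA], fun u w => ?_⟩
  constructor
  · intro h
    have hu : u ∈ A := hedge h
    have hw : w ∈ A := hedge h.symm
    rw [hA] at hu hw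
    simp only [Finset.mem_insert, Finset.mem_singleton] at hu hw
    rcases hu with rfl | rfl <;> rcases hw with rfl | rfl
    · exact absurd rfl h.ne
    · exact Or.inl ⟨rfl, rfl⟩
    · exact Or.inr (Or.inl ⟨rfl, rfl⟩)
    · exact absurd rfl h.ne
  · rintro (⟨rfl, rfl⟩ | ⟨rfl, rfl⟩ | h)
    · exact hadj
    · exact hadj.symm
    · exact h.elim

/-- Connectivity relative to a support. -/
def Conn (A : Finset V) (G : SimpleGraph V) : Prop :=
  ∀ C : Finset V, SimpleGraph.Closed C G → ∀ p ∈ A, p ∈ C → ∀ q ∈ A, q ∈ C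
end Paths
section PathBuild
variable {V : Type*} [Fintype V] [DecidableEq V]
open SimpleGraph

/-- Delete all edges at a vertex. -/
def delVert (G : SimpleGraph V) (x : V) : SimpleGraph V where
  Adj u w := u ≠ x ∧ w ≠ x ∧ G.Adj u w
  symm := ⟨fun u w h => ⟨h.2.1, h.1, h.2.2.symm⟩⟩
  loopless := ⟨fun u h => G.loopless.irrefl u h.2.2⟩

lemma nbr_delVert {G : SimpleGraph V} {x v : V} (hv : v ≠ x) :
    nbr (delVert G x) v = (nbr G v).erase x := by
  ext w
  simp only [mem_nbr, Finset.mem_erase, delVert]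
  constructor
  · rintro ⟨-, h2, h3⟩; exact ⟨h2, h3⟩
  · rintro ⟨h1, h2⟩; exact ⟨hv, h1, h2⟩

lemma path_build : ∀ (n : ℕ) (A : Finset V) (G : SimpleGraph V) (x : V), A.card ≤ n →
    (∀ ⦃u w : V⦄, G.Adj u w → u ∈ A) → Conn A G → (∀ v ∈ A, (nbr G v).card ≤ 2) →
    x ∈ A → (nbr G x).card ≤ 1 →
    ∃ l : List V, l.Nodup ∧ l.toFinset = A ∧ (∀ u w, G.Adj u w ↔ IsConsec l u w) ∧
      ∃ t, l = x :: t := by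
  intro n
  induction n with
  | zero =>
    intro A G x hcard _ _ _ hx _
    exact absurd (Finset.card_pos.mpr ⟨x, hx⟩) (by omega)
  | succ n ih =>
    intro A G x hcard hedge hconn hdeg hx hdx
    rcases Nat.lt_or_ge (nbr G x).card 1 with h0 | h1
    · -- degree 0 : A = {x}
      have hiso : ∀ w, ¬ G.Adj x w := by
        intro w hw
        have : w ∈ nbr G x := mem_nbr.mpr hw
        have := Finset.card_pos.mpr ⟨w, this⟩
        omega
      have hclosed : SimpleGraph.Closed ({x} : Finset V) G := by
        intro u w huw
        simp only [Finset.mem_singleton]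
        constructor
        · rintro rfl; exact absurd huw (hiso w)
        · rintro rfl; exact absurd huw.symm (hiso u)
      have hAx : A = {x} := by
        apply Finset.Subset.antisymm
        · intro q hq
          exact hconn {x} hclosed x hx (Finset.mem_singleton_self x) q hq
        · intro q hq
          rw [Finset.mem_singleton] at hq
          exact hq ▸ hx
      refine ⟨[x], by simp, by simp [hAx], fun u w => ?_, [], rfl⟩
      constructor
      · intro h
        have hu := hedge h
        have hw := hedge h.symm
        rw [hAx, Finset.mem_singleton] at hu hw
        rw [hu, hw] at h
        exact G.loopless.irrefl x h
      · intro h; exact h.elim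
    · -- degree 1
      have hcard1 : (nbr G x).card = 1 := le_antisymm hdx h1
      obtain ⟨y, hy⟩ := Finset.card_eq_one.mp hcard1
      have hxy : G.Adj x y := mem_nbr.mp (hy ▸ Finset.mem_singleton_self y)
      have hyx : y ≠ x := fun hc => G.loopless.irrefl x (hc ▸ hxy)
      have hyA : y ∈ A := hedge hxy.symm
      set A' := A.erase x with hA'
      set G' := delVert G x with hG'
      have hyA' : y ∈ A' := Finset.mem_erase.mpr ⟨hyx, hyA⟩
      have hcard' : A'.card ≤ n := by
        rw [hA', Finset.card_erase_of_mem hx]; omega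
      have hedge' : ∀ ⦃u w : V⦄, G'.Adj u w → u ∈ A' := by
        rintro u w ⟨h1, h2, h3⟩
        exact Finset.mem_erase.mpr ⟨h1, hedge h3⟩
      have hdeg' : ∀ v ∈ A', (nbr G' v).card ≤ 2 := by
        intro v hv
        rw [nbr_delVert (Finset.mem_erase.mp hv).1]
        exact le_trans (Finset.card_le_card (Finset.erase_subset x _))
          (hdeg v (Finset.mem_erase.mp hv).2)
      have hdy' : (nbr G' y).card ≤ 1 := by
        rw [nbr_delVert hyx, Finset.card_erase_of_mem (mem_nbr.mpr hxy.symm)]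
        have := hdeg y hyA
        omega
      have hconn' : Conn A' G' := by
        intro C hC p hp hpC q hq
        set D := C.erase x with hD
        by_cases hyD : y ∈ D
        · have hclosed : SimpleGraph.Closed (insert x D) G := by
            intro u w huw
            simp only [Finset.mem_insert]
            by_cases hux : u = x
            · subst u
              have hwy : w = y := by
                have : w ∈ nbr G x := mem_nbr.mpr huw
                rw [hy, Finset.mem_singleton] at this; exact this
              subst hwy
              simp [hyx, hyD]
            · by_cases hwx : w = x
              · subst w
                have huy : u = y := by
                  have : u ∈ nbr G x := mem_nbr.mpr huw.symm
                  rw [hy, Finset.mem_singleton] at this; exact this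
                subst huy
                simp [hyx, hyD]
              · have : u ∈ C ↔ w ∈ C := hC u w ⟨hux, hwx, huw⟩
                constructor
                · rintro (rfl | hu)
                  · exact absurd rfl hux
                  · exact Or.inr (Finset.mem_erase.mpr ⟨hwx,
                      (this.mp (Finset.mem_erase.mp hu).2)⟩)
                · rintro (rfl | hw)
                  · exact absurd rfl hwx
                  · exact Or.inr (Finset.mem_erase.mpr ⟨hux,
                      (this.mpr (Finset.mem_erase.mp hw).2)⟩)
          have hq' : q ∈ insert x D :=
            hconn (insert x D) hclosed p (Finset.mem_erase.mp hp).2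
              (Finset.mem_insert_of_mem (Finset.mem_erase.mpr ⟨(Finset.mem_erase.mp hp).1, hpC⟩))
              q (Finset.mem_erase.mp hq).2
          rcases Finset.mem_insert.mp hq' with rfl | hq''
          · exact absurd rfl (Finset.mem_erase.mp hq).1
          · exact (Finset.mem_erase.mp hq'').2
        · have hclosed : SimpleGraph.Closed D G := by
            intro u w huw
            by_cases hux : u = x
            · subst u
              have hwy : w = y := by
                have : w ∈ nbr G x := mem_nbr.mpr huw
                rw [hy, Finset.mem_singleton] at this; exact this
              subst hwy
              simp only [hD, Finset.mem_erase]
              constructor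
              · rintro ⟨hc, -⟩; exact absurd rfl hc
              · intro hc
                exact absurd (by rw [hD]; exact Finset.mem_erase.mpr hc) hyD
            · by_cases hwx : w = x
              · subst w
                have huy : u = y := by
                  have : u ∈ nbr G x := mem_nbr.mpr huw.symm
                  rw [hy, Finset.mem_singleton] at this; exact this
                subst huy
                constructor
                · intro hc; exact absurd hc hyD
                · intro hc; exact absurd rfl (Finset.mem_erase.mp hc).1
              · have : u ∈ C ↔ w ∈ C := hC u w ⟨hux, hwx, huw⟩
                simp only [hD, Finset.mem_erase]
                constructor
                · rintro ⟨h1', h2'⟩; exact ⟨hwx, this.mp h2'⟩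
                · rintro ⟨h1', h2'⟩; exact ⟨hux, this.mpr h2'⟩
          have hq' : q ∈ D :=
            hconn D hclosed p (Finset.mem_erase.mp hp).2
              (Finset.mem_erase.mpr ⟨(Finset.mem_erase.mp hp).1, hpC⟩)
              q (Finset.mem_erase.mp hq).2
          exact (Finset.mem_erase.mp hq').2
      obtain ⟨l', hnd', hfin', hadj', t', hl'⟩ :=
        ih A' G' y hcard' hedge' hconn' hdeg' hyA' hdy'
      have hxl' : x ∉ l' := by
        rw [← List.mem_toFinset, hfin']
        exact fun hc => (Finset.mem_erase.mp hc).1 rfl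
      refine ⟨x :: l', List.nodup_cons.mpr ⟨hxl', hnd'⟩, ?_, ?_, l', rfl⟩
      · rw [List.toFinset_cons, hfin', hA', Finset.insert_erase hx]
      · intro u w
        constructor
        · intro h
          by_cases hux : u = x
          · subst u
            have hwy : w = y := by
              have : w ∈ nbr G x := mem_nbr.mpr h
              rw [hy, Finset.mem_singleton] at this; exact this
            subst hwy
            rw [hl']
            exact Or.inl ⟨rfl, rfl⟩
          · by_cases hwx : w = x
            · subst w
              have huy : u = y := by
                have : u ∈ nbr G x := mem_nbr.mpr h.symm
                rw [hy, Finset.mem_singleton] at this; exact this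
              subst huy
              rw [hl']
              exact Or.inr (Or.inl ⟨rfl, rfl⟩)
            · exact isConsec_cons ((hadj' u w).mp ⟨hux, hwx, h⟩) x
        · intro h
          rw [hl'] at h
          rcases h with ⟨rfl, rfl⟩ | ⟨rfl, rfl⟩ | h
          · exact hxy
          · exact hxy.symm
          · exact ((hadj' u w).mpr (hl' ▸ h)).2.2
end PathBuild
section Key
variable {V : Type*} [Fintype V] [DecidableEq V]
open SimpleGraph

lemma nbr_lcdel_eq {G : SimpleGraph V} {v u : V} (hvu : ¬ G.Adj v u) (huv : u ≠ v) :
    nbr (G.lcdel v) u = nbr G u := by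
  ext w
  rw [mem_nbr, mem_nbr, lcdel_adj_of_not_adj hvu]
  constructor
  · rintro ⟨h, -, -⟩; exact h
  · intro h
    refine ⟨h, fun hc => hvu ((hc ▸ h).symm), huv⟩

lemma nbr_subset {G : SimpleGraph V} {A : Finset V}
    (hedge : ∀ ⦃u w : V⦄, G.Adj u w → u ∈ A) (u : V) : nbr G u ⊆ A.erase u := by
  intro w hw
  rw [mem_nbr] at hw
  exact Finset.mem_erase.mpr ⟨fun hc => G.loopless.irrefl u (hc ▸ hw), hedge hw.symm⟩

lemma key {A : Finset V} {G : SimpleGraph V}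
    (hedge : ∀ ⦃u w : V⦄, G.Adj u w → u ∈ A) (hA3 : 3 ≤ A.card)
    (hconn : Conn A G) (hnp : ¬ ConcretePath A G) :
    ∃ v ∈ A, ¬ ConcretePath (A.erase v) (G.lcdel v) := by
  by_cases hc1 : ∃ u v, 3 ≤ (nbr G u).card ∧ v ∈ A ∧ v ≠ u ∧ ¬ G.Adj u v
  · obtain ⟨u, v, hu3, hvA, hvu, hnadj⟩ := hc1
    refine ⟨v, hvA, not_concretePath_of_degree3 (a := u) ?_⟩
    rw [nbr_lcdel_eq (fun hc => hnadj hc.symm) (fun hc => hvu hc.symm)]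
    exact hu3
  push_neg at hc1
  -- hc1 : ∀ u v, 3 ≤ (nbr G u).card → v ∈ A → v ≠ u → G.Adj u v
  by_cases hbig : ∃ u, 3 ≤ (nbr G u).card
  · obtain ⟨u, hu3⟩ := hbig
    have huA : u ∈ A := by
      obtain ⟨w, hw⟩ := Finset.card_pos.mp (by omega : 0 < (nbr G u).card)
      exact hedge (mem_nbr.mp hw)
    by_cases htwo : ∃ b, b ≠ u ∧ 3 ≤ (nbr G b).card
    · -- two universal vertices: pivot u, b becomes isolated
      obtain ⟨b, hbu, hb3⟩ := htwo
      have hbA : b ∈ A := by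
        obtain ⟨w, hw⟩ := Finset.card_pos.mp (by omega : 0 < (nbr G b).card)
        exact hedge (mem_nbr.mp hw)
      refine ⟨u, huA, not_concretePath_of_isolated (a := b)
        (Finset.mem_erase.mpr ⟨hbu, hbA⟩) ?_ ?_⟩
      · intro w hw
        rw [lcdel_adj] at hw
        obtain ⟨hbu', hwu, hbw, hor⟩ := hw
        have hub : G.Adj u b := hc1 u b hu3 hbA hbu
        rcases hor with ⟨h1, hn⟩ | ⟨⟨-, huw⟩, hnbw⟩
        · exact hn ⟨hub, hc1 u w hu3 (hedge h1.symm) hwu⟩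
        · exact hnbw (hc1 b w hb3 (hedge huw.symm) (fun hc => hbw hc.symm))
      · rw [Finset.card_erase_of_mem huA]; omega
    push_neg at htwo
    -- u is the unique vertex of degree ≥ 3, and it is universal on A
    have huniv : ∀ x ∈ A, x ≠ u → G.Adj u x := fun x hx hxu => hc1 u x hu3 hx hxu
    have hA4 : 4 ≤ A.card := by
      have h1 := Finset.card_le_card ((nbr_subset hedge u))
      rw [Finset.card_erase_of_mem huA] at h1
      omega
    by_cases hout : ∃ a b, G.Adj a b ∧ a ≠ u ∧ b ≠ u
    · -- an edge outside u : pivot a, b becomes isolated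
      obtain ⟨a, b, hab, hau, hbu⟩ := hout
      have haA : a ∈ A := hedge hab
      have hbA : b ∈ A := hedge hab.symm
      have hua : G.Adj u a := huniv a haA hau
      have hub : G.Adj u b := huniv b hbA hbu
      have hnbra : nbr G a = {u, b} := by
        refine (Finset.eq_of_subset_of_card_le ?_ ?_).symm
        · intro w hw
          rcases Finset.mem_insert.mp hw with rfl | hw'
          · exact mem_nbr.mpr hua.symm
          · rw [Finset.mem_singleton] at hw'
            exact hw' ▸ mem_nbr.mpr hab
        · have hle : (nbr G a).card ≤ 2 := by have := htwo a hau; omega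
          have : ({u, b} : Finset V).card = 2 := by
            rw [Finset.card_insert_of_notMem (by simp [hub.ne]), Finset.card_singleton]
          omega
      have hnbrb : nbr G b = {u, a} := by
        refine (Finset.eq_of_subset_of_card_le ?_ ?_).symm
        · intro w hw
          rcases Finset.mem_insert.mp hw with rfl | hw'
          · exact mem_nbr.mpr hub.symm
          · rw [Finset.mem_singleton] at hw'
            exact hw' ▸ mem_nbr.mpr hab.symm
        · have hle : (nbr G b).card ≤ 2 := by have := htwo b hbu; omega
          have : ({u, a} : Finset V).card = 2 := by
            rw [Finset.card_insert_of_notMem (by simp [hua.ne]), Finset.card_singleton]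
          omega
      refine ⟨a, haA, not_concretePath_of_isolated (a := b)
        (Finset.mem_erase.mpr ⟨hab.ne', hbA⟩) ?_ ?_⟩
      · intro w hw
        rw [lcdel_adj] at hw
        obtain ⟨hba, hwa, hbw, hor⟩ := hw
        rcases hor with ⟨h1, hn⟩ | ⟨⟨-, haw⟩, hnbw⟩
        · have : w ∈ nbr G b := mem_nbr.mpr h1
          rw [hnbrb] at this
          rcases Finset.mem_insert.mp this with rfl | hw'
          · exact hn ⟨hab, hua.symm⟩
          · rw [Finset.mem_singleton] at hw'
            exact hwa hw'
        · have : w ∈ nbr G a := mem_nbr.mpr haw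
          rw [hnbra] at this
          rcases Finset.mem_insert.mp this with rfl | hw'
          · exact hnbw hub.symm
          · rw [Finset.mem_singleton] at hw'
            exact hbw hw'.symm
      · rw [Finset.card_erase_of_mem haA]; omega
    · -- all edges meet u : pivot u, everything becomes dense
      push_neg at hout
      refine ⟨u, huA, not_concretePath_of_min_degree2 ?_ ?_⟩
      · refine Finset.card_pos.mp ?_
        rw [Finset.card_erase_of_mem huA]; omega
      · intro x hx
        obtain ⟨hxu, hxA⟩ := Finset.mem_erase.mp hx
        have hsub : (A.erase u).erase x ⊆ nbr (G.lcdel u) x := by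
          intro y hy
          have hyx := (Finset.mem_erase.mp hy).1
          have hyu := (Finset.mem_erase.mp (Finset.mem_erase.mp hy).2).1
          have hyA := (Finset.mem_erase.mp (Finset.mem_erase.mp hy).2).2
          rw [mem_nbr, lcdel_adj]
          refine ⟨hxu, hyu, fun hc => hyx hc.symm, Or.inr ⟨⟨huniv x hxA hxu, huniv y hyA hyu⟩, ?_⟩⟩
          intro hc
          exact hyu (hout x y hc hxu)
        have h1 := Finset.card_le_card hsub
        rw [Finset.card_erase_of_mem (Finset.mem_erase.mpr ⟨hxu, hxA⟩),
          Finset.card_erase_of_mem huA] at h1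
        omega
  · -- max degree ≤ 2
    push_neg at hbig
    by_cases hsmall : ∃ x ∈ A, (nbr G x).card ≤ 1
    · obtain ⟨x, hxA, hx1⟩ := hsmall
      exfalso
      obtain ⟨l, hnd, hfin, hadj, -⟩ := path_build A.card A G x le_rfl hedge hconn
        (fun v _ => by have := hbig v; omega) hxA hx1
      exact hnp ⟨l, hnd, hfin, hadj⟩
    · push_neg at hsmall
      have hreg : ∀ x ∈ A, (nbr G x).card = 2 := by
        intro x hx
        have := hbig x
        have := hsmall x hx
        omega
      obtain ⟨v, hvA⟩ := Finset.card_pos.mp (by omega : 0 < A.card)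
      obtain ⟨a, b, hab, hnbrv⟩ := Finset.card_eq_two.mp (hreg v hvA)
      have hva : G.Adj v a := mem_nbr.mp (hnbrv ▸ Finset.mem_insert_self a {b})
      have hvb : G.Adj v b := mem_nbr.mp (hnbrv ▸ Finset.mem_insert_of_mem
        (Finset.mem_singleton_self b))
      have haA : a ∈ A := hedge hva.symm
      have hbA : b ∈ A := hedge hvb.symm
      by_cases hadjab : G.Adj a b
      · -- triangle : pivot v, a becomes isolated
        refine ⟨v, hvA, not_concretePath_of_isolated (a := a)
          (Finset.mem_erase.mpr ⟨hva.ne', haA⟩) ?_ ?_⟩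
        · have hnbra : nbr G a = {v, b} := by
            refine (Finset.eq_of_subset_of_card_le ?_ ?_).symm
            · intro w hw
              rcases Finset.mem_insert.mp hw with rfl | hw'
              · exact mem_nbr.mpr hva.symm
              · rw [Finset.mem_singleton] at hw'
                exact hw' ▸ mem_nbr.mpr hadjab
            · have : ({v, b} : Finset V).card = 2 := by
                rw [Finset.card_insert_of_notMem (by simp [hvb.ne]), Finset.card_singleton]
              rw [hreg a haA]
              omega
          intro w hw
          rw [lcdel_adj] at hw
          obtain ⟨hav, hwv, haw, hor⟩ := hw
          rcases hor with ⟨h1, hn⟩ | ⟨⟨-, hvw⟩, hnaw⟩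
          · have : w ∈ nbr G a := mem_nbr.mpr h1
            rw [hnbra] at this
            rcases Finset.mem_insert.mp this with rfl | hw'
            · exact hwv rfl
            · rw [Finset.mem_singleton] at hw'
              exact hn ⟨hva, hw' ▸ hvb⟩
          · have : w ∈ nbr G v := mem_nbr.mpr hvw
            rw [hnbrv] at this
            rcases Finset.mem_insert.mp this with rfl | hw'
            · exact haw rfl
            · rw [Finset.mem_singleton] at hw'
              exact hnaw (hw' ▸ hadjab)
        · rw [Finset.card_erase_of_mem hvA]; omega
      · -- 2-regular, no triangle at v : pivot v, min degree stays 2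
        have main : ∀ a' b', a' ≠ b' → nbr G v = {a', b'} → ¬ G.Adj a' b' →
            2 ≤ (nbr (G.lcdel v) a').card := by
          intro a' b' hab' hnbrv' hnadj'
          have hva' : G.Adj v a' := mem_nbr.mp (hnbrv' ▸ Finset.mem_insert_self a' {b'})
          have hvb' : G.Adj v b' := mem_nbr.mp (hnbrv' ▸ Finset.mem_insert_of_mem
            (Finset.mem_singleton_self b'))
          have ha'A : a' ∈ A := hedge hva'.symm
          have hvnbra' : v ∈ nbr G a' := mem_nbr.mpr hva'.symm
          obtain ⟨c, hc⟩ : ∃ c, (nbr G a').erase v = {c} := by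
            apply Finset.card_eq_one.mp
            rw [Finset.card_erase_of_mem hvnbra', hreg a' ha'A]
          have hcnbr : c ∈ nbr G a' := (Finset.erase_subset v _) (hc ▸ Finset.mem_singleton_self c)
          have hcv : c ≠ v := by
            have := hc ▸ Finset.mem_singleton_self c
            exact fun hcon => (Finset.mem_erase.mp (hc ▸ Finset.mem_singleton_self c)).1 hcon
          have hac : G.Adj a' c := mem_nbr.mp hcnbr
          have hcb : c ≠ b' := fun hcon => hnadj' (hcon ▸ hac)
          have hsub : ({c, b'} : Finset V) ⊆ nbr (G.lcdel v) a' := by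
            intro w hw
            rw [mem_nbr, lcdel_adj]
            rcases Finset.mem_insert.mp hw with rfl | hw'
            · refine ⟨hva'.ne', hcv, hac.ne, Or.inl ⟨hac, ?_⟩⟩
              rintro ⟨-, hvc⟩
              have : w ∈ nbr G v := mem_nbr.mpr hvc
              rw [hnbrv'] at this
              rcases Finset.mem_insert.mp this with rfl | hw''
              · exact hac.ne rfl
              · rw [Finset.mem_singleton] at hw''
                exact hcb hw''
            · rw [Finset.mem_singleton] at hw'
              subst hw'
              exact ⟨hva'.ne', hvb'.ne', hab', Or.inr ⟨⟨hva', hvb'⟩, hnadj'⟩⟩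
          have h1 := Finset.card_le_card hsub
          rw [Finset.card_insert_of_notMem (by simp [hcb]), Finset.card_singleton] at h1
          exact h1
        refine ⟨v, hvA, not_concretePath_of_min_degree2 ?_ ?_⟩
        · refine Finset.card_pos.mp ?_
          rw [Finset.card_erase_of_mem hvA]; omega
        · intro x hx
          obtain ⟨hxv, hxA⟩ := Finset.mem_erase.mp hx
          by_cases hxa : x = a
          · exact hxa ▸ main a b hab hnbrv hadjab
          · by_cases hxb : x = b
            · subst hxb
              exact main x a (Ne.symm hab) (by rw [hnbrv, Finset.pair_comm])
                (fun hcon => hadjab hcon.symm)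
            · have hnadjvx : ¬ G.Adj v x := by
                intro hcon
                have : x ∈ nbr G v := mem_nbr.mpr hcon
                rw [hnbrv] at this
                rcases Finset.mem_insert.mp this with rfl | hw'
                · exact hxa rfl
                · rw [Finset.mem_singleton] at hw'
                  exact hxb hw'
              rw [nbr_lcdel_eq hnadjvx hxv, hreg x hxA]
end Key
section Main
variable {V : Type*} [Fintype V] [DecidableEq V]
open SimpleGraph

lemma main_induction : ∀ (n : ℕ) (A : Finset V) (G : SimpleGraph V),
    A.card ≤ n → (∀ ⦃u w : V⦄, G.Adj u w → u ∈ A) → 2 ≤ A.card → ¬ ConcretePath A G →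
    ∃ s : List V, s.Nodup ∧ (∀ v ∈ s, v ∈ A) ∧ ∃ a b : V, a ∈ A ∧ b ∈ A ∧ a ∉ s ∧ b ∉ s ∧
      a ≠ b ∧ (∀ w, ¬ (fdel G s).Adj a w) ∧ (∀ w, ¬ (fdel G s).Adj b w) := by
  intro n
  induction n with
  | zero => intro A G h1 _ h2 _; omega
  | succ n ih =>
    intro A G hcard hedge h2 hnp
    by_cases hconn : Conn A G
    · by_cases hA2 : A.card = 2
      · exfalso
        obtain ⟨a, b, hab, hA⟩ := Finset.card_eq_two.mp hA2
        have haA : a ∈ A := hA ▸ Finset.mem_insert_self a {b}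
        have hbA : b ∈ A := hA ▸ Finset.mem_insert_of_mem (Finset.mem_singleton_self b)
        have hadj : G.Adj a b := by
          by_contra hnadj
          have hnoedge : ∀ u w, ¬ G.Adj u w := by
            intro u w huw
            have hu := hedge huw
            have hw := hedge huw.symm
            rw [hA, Finset.mem_insert, Finset.mem_singleton] at hu hw
            rcases hu with h1 | h1 <;> rcases hw with h2 | h2 <;> rw [h1, h2] at huw <;>
              first
              | exact G.loopless.irrefl _ huw
              | exact hnadj huw
              | exact hnadj huw.symm
          have hclosed : SimpleGraph.Closed ({a} : Finset V) G := by
            intro u w huw; exact absurd huw (hnoedge u w)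
          have := hconn {a} hclosed a haA (Finset.mem_singleton_self a) b hbA
          rw [Finset.mem_singleton] at this
          exact hab this.symm
        exact hnp (concretePath_pair hA hab hadj hedge)
      · have hA3 : 3 ≤ A.card := by omega
        obtain ⟨v, hvA, hnp'⟩ := key hedge hA3 hconn hnp
        have hcard' : (A.erase v).card ≤ n := by
          rw [Finset.card_erase_of_mem hvA]; omega
        have h2' : 2 ≤ (A.erase v).card := by
          rw [Finset.card_erase_of_mem hvA]; omega
        obtain ⟨s, hnd, hmem, a, b, haA, hbA, has, hbs, hab, hiso1, hiso2⟩ :=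
          ih (A.erase v) (G.lcdel v) hcard' (lcdel_edge_mem hedge v) h2' hnp'
        refine ⟨v :: s, List.nodup_cons.mpr ⟨fun hc => ?_, hnd⟩,
          fun x hx => ?_, a, b,
          (Finset.mem_erase.mp haA).2, (Finset.mem_erase.mp hbA).2, ?_, ?_, hab, hiso1, hiso2⟩
        · exact (Finset.mem_erase.mp (hmem v hc)).1 rfl
        · rcases List.mem_cons.mp hx with rfl | hx'
          · exact hvA
          · exact (Finset.mem_erase.mp (hmem x hx')).2
        · intro hc
          rcases List.mem_cons.mp hc with rfl | hc'
          · exact (Finset.mem_erase.mp haA).1 rfl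
          · exact has hc'
        · intro hc
          rcases List.mem_cons.mp hc with rfl | hc'
          · exact (Finset.mem_erase.mp hbA).1 rfl
          · exact hbs hc'
    · -- disconnected : two closed pieces, delete each except one vertex
      rw [Conn] at hconn
      push_neg at hconn
      obtain ⟨C, hC, p, hpA, hpC, q, hqA, hqC⟩ := hconn
      set C' := C ∩ A with hC'
      have hCl : SimpleGraph.Closed C' G := by
        intro u w huw
        rw [hC', Finset.mem_inter, Finset.mem_inter]
        rw [hC u w huw]
        simp [hedge huw, hedge huw.symm]
      have hCl2 : SimpleGraph.Closed (A \ C') G := by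
        intro u w huw
        rw [Finset.mem_sdiff, Finset.mem_sdiff]
        rw [hCl u w huw]
        simp [hedge huw, hedge huw.symm]
      have hpC' : p ∈ C' := Finset.mem_inter.mpr ⟨hpC, hpA⟩
      have hqC' : q ∈ A \ C' := Finset.mem_sdiff.mpr ⟨hqA,
        fun hc => hqC (Finset.mem_inter.mp hc).1⟩
      set s : List V := (C'.erase p).toList ++ ((A \ C').erase q).toList with hs
      have hnd : s.Nodup := by
        rw [hs, List.nodup_append]
        refine ⟨Finset.nodup_toList _, Finset.nodup_toList _, ?_⟩
        intro x hx1 y hx2 hxy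
        subst hxy
        rw [Finset.mem_toList, Finset.mem_erase] at hx1 hx2
        exact (Finset.mem_sdiff.mp hx2.2).2 hx1.2
      have hmem : ∀ v ∈ s, v ∈ A := by
        intro v hv
        rw [hs, List.mem_append, Finset.mem_toList, Finset.mem_toList] at hv
        rcases hv with hv | hv
        · exact Finset.mem_inter.mp (Finset.mem_erase.mp hv).2 |>.2
        · exact (Finset.mem_sdiff.mp (Finset.mem_erase.mp hv).2).1
      refine ⟨s, hnd, hmem, p, q, hpA, hqA, ?_, ?_, ?_, ?_, ?_⟩
      · intro hc
        rw [hs, List.mem_append, Finset.mem_toList, Finset.mem_toList] at hc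
        rcases hc with hc | hc
        · exact (Finset.mem_erase.mp hc).1 rfl
        · exact (Finset.mem_sdiff.mp (Finset.mem_erase.mp hc).2).2 hpC'
      · intro hc
        rw [hs, List.mem_append, Finset.mem_toList, Finset.mem_toList] at hc
        rcases hc with hc | hc
        · exact (Finset.mem_sdiff.mp hqC').2 (Finset.mem_erase.mp hc).2
        · exact (Finset.mem_erase.mp hc).1 rfl
      · intro hc
        exact (Finset.mem_sdiff.mp hqC').2 (hc ▸ hpC')
      · refine isolated_of_closed hCl hpC' ?_
        intro w hw hwp
        rw [hs, List.mem_append, Finset.mem_toList]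
        exact Or.inl (Finset.mem_erase.mpr ⟨hwp, hw⟩)
      · refine isolated_of_closed hCl2 hqC' ?_
        intro w hw hwq
        rw [hs, List.mem_append, Finset.mem_toList, Finset.mem_toList]
        exact Or.inr (Finset.mem_erase.mpr ⟨hwq, hw⟩)
end Main
section Iso
variable {V : Type*} [Fintype V] [DecidableEq V]
open SimpleGraph

lemma concretePath_iso {G : SimpleGraph V} (h : ConcretePath (Finset.univ : Finset V) G) :
    ∃ n, Nonempty (G ≃g SimpleGraph.pathGraph n) := by
  obtain ⟨l, hnd, hfin, hadj⟩ := h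
  have hmem : ∀ x : V, x ∈ l := by
    intro x
    rw [← List.mem_toFinset, hfin]
    exact Finset.mem_univ x
  refine ⟨l.length, ⟨?_⟩⟩
  refine (RelIso.mk (hnd.getEquivOfForallMemList l hmem) ?_).symm
  intro i j
  show G.Adj (l.get i) (l.get j) ↔ (SimpleGraph.pathGraph l.length).Adj i j
  rw [SimpleGraph.pathGraph_adj, hadj, isConsec_iff_get? l]
  constructor
  · rintro ⟨k, ⟨h1, h2⟩ | ⟨h1, h2⟩⟩
    · obtain ⟨hk, hk'⟩ := List.getElem?_eq_some_iff.mp h1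
      obtain ⟨hk2, hk2'⟩ := List.getElem?_eq_some_iff.mp h2
      have : (⟨k, hk⟩ : Fin l.length) = i := (List.Nodup.get_inj_iff hnd).mp hk'
      have h2 : (⟨k + 1, hk2⟩ : Fin l.length) = j := (List.Nodup.get_inj_iff hnd).mp hk2'
      left
      rw [← this, ← h2]
    · obtain ⟨hk, hk'⟩ := List.getElem?_eq_some_iff.mp h1
      obtain ⟨hk2, hk2'⟩ := List.getElem?_eq_some_iff.mp h2
      have : (⟨k, hk⟩ : Fin l.length) = j := (List.Nodup.get_inj_iff hnd).mp hk'
      have h2 : (⟨k + 1, hk2⟩ : Fin l.length) = i := (List.Nodup.get_inj_iff hnd).mp hk2'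
      right
      rw [← this, ← h2]
  · rintro (hij | hij)
    · refine ⟨i, Or.inl ⟨?_, ?_⟩⟩
      · rw [List.getElem?_eq_getElem i.isLt]; rfl
      · rw [hij, List.getElem?_eq_getElem j.isLt]; rfl
    · refine ⟨j, Or.inr ⟨?_, ?_⟩⟩
      · rw [List.getElem?_eq_getElem j.isLt]; rfl
      · rw [hij, List.getElem?_eq_getElem i.isLt]; rfl
end Iso


/-- Theorem 3.3: if `G` is a finite simple graph on at least two vertices that is
not a path (not isomorphic to any path graph `P_n`), then there is a mark set
`L` such that the graft `(G, L)` (on full support) has a local complementation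
minor having at least two isolated vertices, neither of which is marked. -/
theorem exists_graft_lcMinor_two_isolated {V : Type*} [Fintype V] [DecidableEq V]
    (G : SimpleGraph V) (hcard : 2 ≤ Fintype.card V)
    (hnp : ¬ ∃ n, Nonempty (G ≃g SimpleGraph.pathGraph n)) :
    ∃ (L : Finset V) (Δ : Graft V),
      (Graft.mk Finset.univ G (fun u _ _ => Finset.mem_univ u) L
        (Finset.subset_univ L)).IsLCMinor Δ ∧
      ∃ a b : V, a ∈ Δ.support ∧ b ∈ Δ.support ∧ a ≠ b ∧
        (∀ w, ¬ Δ.G.Adj a w) ∧ (∀ w, ¬ Δ.G.Adj b w) ∧ a ∉ Δ.L ∧ b ∉ Δ.L := by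
  
  have hnp' : ¬ ConcretePath (Finset.univ : Finset V) G :=
    fun hc => hnp (concretePath_iso hc)
  have hcard' : 2 ≤ (Finset.univ : Finset V).card := by
    rw [Finset.card_univ]; exact hcard
  obtain ⟨s, hnd, hmem, a, b, -, -, has, hbs, hab, hiso1, hiso2⟩ :=
    main_induction (Finset.univ : Finset V).card Finset.univ G le_rfl
      (fun u _ _ => Finset.mem_univ u) hcard' hnp'
  obtain ⟨L, hL, Δ, hmin, h1, h2, h3⟩ :=
    realize s Finset.univ G (fun u _ _ => Finset.mem_univ u) hnd
      (fun v _ => Finset.mem_univ v)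
  refine ⟨L, Δ, hmin, a, b, ?_, ?_, hab, ?_, ?_, ?_, ?_⟩
  · rw [h1, Finset.mem_sdiff]
    exact ⟨Finset.mem_univ a, fun hc => has (List.mem_toFinset.mp hc)⟩
  · rw [h1, Finset.mem_sdiff]
    exact ⟨Finset.mem_univ b, fun hc => hbs (List.mem_toFinset.mp hc)⟩
  · rw [h2]; exact hiso1
  · rw [h2]; exact hiso2
  · rw [h3]; exact Finset.notMem_empty a
  · rw [h3]; exact Finset.notMem_empty b
end

section
/- Let G be a connected simple graph on n ≥ 4 vertices that contains a cycle, and let v be a vertex of G with exactly two neighbors a and b. If the local complementation deletion G ⊟ v is a path (isomorphic to some path graph), then a and b are adjacent in G (so that v, a, b form a triangle in G). -/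
open SimpleGraph


open scoped Classical

/-- Local complementation deletion `G ⊟ v := (G * v) \ v`: perform local
complementation at `v` and then delete the vertex `v`. -/
def SimpleGraph.lcdSub {V : Type*} (G : SimpleGraph V) (v : V) :
    SimpleGraph {u : V // u ≠ v} :=
  SimpleGraph.induce {u : V | u ≠ v} (G.localComp v)

private lemma pathGraph_crossing' {n : ℕ} (u w : Fin n) (hw : (w : ℕ) = (u : ℕ) + 1) :
    ∀ {s t : Fin n} (p : (pathGraph n).Walk s t), (s : ℕ) ≤ (u : ℕ) → (w : ℕ) ≤ (t : ℕ) →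
      s(u, w) ∈ p.edges := by
  intro s t p
  induction p with
  | nil => intro h1 h2; omega
  | @cons x y z h q ih =>
    intro h1 h2
    by_cases hy : (y : ℕ) ≤ (u : ℕ)
    · exact List.mem_cons_of_mem _ (ih hy h2)
    · have hadj := pathGraph_adj.mp h
      have hx : (x : ℕ) = (u : ℕ) ∧ (y : ℕ) = (w : ℕ) := by
        rcases hadj with h' | h' <;> omega
      have hxu : x = u := Fin.ext hx.1
      have hyw : y = w := Fin.ext hx.2
      subst hxu; subst hyw
      exact List.mem_cons_self

private lemma pathGraph_isAcyclic' (n : ℕ) : (pathGraph n).IsAcyclic := by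
  rw [isAcyclic_iff_forall_adj_isBridge]
  intro x y hxy
  rw [isBridge_iff]
  rw [reachable_delete_edges_iff_exists_walk]
  rintro ⟨p, hp⟩
  rcases pathGraph_adj.mp hxy with h | h
  · exact hp (pathGraph_crossing' x y h.symm p le_rfl le_rfl)
  · have h2 := pathGraph_crossing' y x h.symm p.reverse le_rfl le_rfl
    rw [Walk.edges_reverse, List.mem_reverse] at h2
    rw [Sym2.eq_swap] at h2
    exact hp h2

private lemma lift_walk' {V : Type*} {G : SimpleGraph V} {v : V}
    {H : SimpleGraph {u : V // u ≠ v}}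
    (hadj : ∀ (x y : V) (hx : x ≠ v) (hy : y ≠ v), G.Adj x y → H.Adj ⟨x, hx⟩ ⟨y, hy⟩) :
    ∀ {x y : V} (p : G.Walk x y) (hx : x ≠ v) (hy : y ≠ v), v ∉ p.support →
      ∃ q : H.Walk ⟨x, hx⟩ ⟨y, hy⟩,
        q.support.map Subtype.val = p.support ∧
        q.edges.map (Sym2.map Subtype.val) = p.edges := by
  intro x y p
  induction p with
  | nil => intro hx hy _; exact ⟨.nil, by simp, by simp⟩
  | @cons x' y' z' h q ih =>
    intro hx hz hv
    rw [Walk.support_cons, List.mem_cons] at hv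
    push_neg at hv
    have hy' : y' ≠ v := fun hh => hv.2 (hh ▸ q.start_mem_support)
    obtain ⟨q', hs, he⟩ := ih hy' hz hv.2
    exact ⟨.cons (hadj _ _ hx hy' h) q',
      by simp [Walk.support_cons, hs], by simp [Walk.edges_cons, he, Sym2.map_pair_eq]⟩


/-- Case 2.2.2 of Theorem 3.3: let `G` be a connected simple graph on `n ≥ 4`
vertices containing a cycle, and let `v` be a vertex with exactly two neighbours
`a` and `b`.  If `G ⊟ v` is a path, then `a` and `b` are adjacent in `G`
(so `v, a, b` form a triangle in `G`). -/
theorem adj_of_lcdSub_isPath {V : Type*} [Fintype V] [DecidableEq V]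
    (G : SimpleGraph V) (hcard : 4 ≤ Fintype.card V)
    (hconn : G.Connected) (hcyc : ¬ G.IsAcyclic)
    (v a b : V) (hab : a ≠ b) (hN : G.neighborSet v = {a, b})
    (hpath : ∃ n, Nonempty (G.lcdSub v ≃g SimpleGraph.pathGraph n)) :
    G.Adj a b := by
  by_contra hnadj
  obtain ⟨n, ⟨f⟩⟩ := hpath
  -- `G ⊟ v` is acyclic since it is isomorphic to a path graph
  have hHacyc : (G.lcdSub v).IsAcyclic := by
    intro u c hc
    exact pathGraph_isAcyclic' n (c.map f.toHom) (hc.map f.injective)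
  -- neighbours of `v`
  have hadjv : ∀ u : V, G.Adj v u ↔ (u = a ∨ u = b) := by
    intro u
    rw [← SimpleGraph.mem_neighborSet, hN]
    simp [Set.mem_insert_iff]
  have hav : a ≠ v := ((hadjv a).mpr (Or.inl rfl)).ne'
  have hbv : b ≠ v := ((hadjv b).mpr (Or.inr rfl)).ne'
  -- adjacency transfer into `G ⊟ v`
  have hadjH : ∀ (x y : V) (hx : x ≠ v) (hy : y ≠ v), G.Adj x y →
      (G.lcdSub v).Adj ⟨x, hx⟩ ⟨y, hy⟩ := by
    intro x y hx hy hxy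
    show x ≠ y ∧ Xor' (G.Adj x y) (G.Adj v x ∧ G.Adj v y)
    refine ⟨hxy.ne, Or.inl ⟨hxy, ?_⟩⟩
    rintro ⟨h1, h2⟩
    rcases (hadjv x).mp h1 with rfl | rfl <;> rcases (hadjv y).mp h2 with rfl | rfl
    · exact hxy.ne rfl
    · exact hnadj hxy
    · exact hnadj hxy.symm
    · exact hxy.ne rfl
  have hHab : (G.lcdSub v).Adj ⟨a, hav⟩ ⟨b, hbv⟩ := by
    show a ≠ b ∧ Xor' (G.Adj a b) (G.Adj v a ∧ G.Adj v b)
    exact ⟨hab, Or.inr ⟨⟨(hadjv a).mpr (Or.inl rfl), (hadjv b).mpr (Or.inr rfl)⟩, hnadj⟩⟩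
  -- a cycle in `G`
  unfold SimpleGraph.IsAcyclic at hcyc
  push_neg at hcyc
  obtain ⟨u, c, hc⟩ := hcyc
  -- the common final contradiction in the case where cycles pass through `v`
  have final : ∀ (x z : V) (hxv : x ≠ v) (hzv : z ≠ v),
      (G.lcdSub v).Adj ⟨x, hxv⟩ ⟨z, hzv⟩ → ¬ G.Adj x z →
      ∀ (p2 : G.Walk z x), p2.IsPath → v ∉ p2.support → False := by
    intro x z hxv hzv hAdj hno p2 hp2 hvni
    obtain ⟨q, hs, he⟩ := lift_walk' hadjH p2 hzv hxv hvni
    apply hHacyc (Walk.cons hAdj q)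
    rw [Walk.cons_isCycle_iff]
    constructor
    · rw [Walk.isPath_def]
      have h1 := hp2.support_nodup
      rw [← hs] at h1
      exact h1.of_map
    · intro hmem
      have h2 := List.mem_map_of_mem (f := Sym2.map Subtype.val) hmem
      rw [he, Sym2.map_pair_eq] at h2
      exact hno (p2.edges_subset_edgeSet h2)
  by_cases hvmem : v ∈ c.support
  · -- the cycle passes through `v`
    have hc' := hc.rotate hvmem
    obtain ⟨x, h1, p, hce⟩ := Walk.not_nil_iff.mp hc'.not_nil
    rw [hce, Walk.cons_isCycle_iff] at hc'
    obtain ⟨hppath, hpedge⟩ := hc'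
    have hxv : x ≠ v := h1.ne'
    have hrev := hppath.reverse
    obtain ⟨z, h2, p2, hre⟩ :=
      Walk.not_nil_iff.mp (Walk.not_nil_of_ne (fun hh => hxv hh.symm) : ¬ p.reverse.Nil)
    rw [hre, Walk.cons_isPath_iff] at hrev
    obtain ⟨hp2path, hvni⟩ := hrev
    have hzv : z ≠ v := h2.ne'
    have hzx : z ≠ x := by
      rintro rfl
      apply hpedge
      have h3 : s(v, z) ∈ p.reverse.edges := by
        rw [hre]; exact List.mem_cons_self
      rwa [Walk.edges_reverse, List.mem_reverse] at h3
    rcases (hadjv x).mp h1 with rfl | rfl <;> rcases (hadjv z).mp h2 with rfl | rfl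
    · exact absurd rfl hzx
    · exact final _ _ hxv hzv hHab hnadj p2 hp2path hvni
    · exact final _ _ hxv hzv (hHab.symm) (fun hh => hnadj hh.symm) p2 hp2path hvni
    · exact absurd rfl hzx
  · -- the cycle avoids `v`
    have hu : u ≠ v := fun h => hvmem (h ▸ c.start_mem_support)
    obtain ⟨q, hs, he⟩ := lift_walk' hadjH c hu hu hvmem
    apply hHacyc q
    rw [Walk.isCycle_def]
    refine ⟨?_, ?_, ?_⟩
    · rw [Walk.isTrail_def]
      have h1 := hc.isTrail.edges_nodup
      rw [← he] at h1
      exact h1.of_map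
    · intro h
      have h3 := hc.three_le_length
      have h4 := congrArg List.length hs
      rw [h] at h4
      simp only [Walk.support_nil, List.map_cons, List.map_nil, List.length_cons,
        List.length_nil, Walk.length_support] at h4
      omega
    · have h2 := hc.support_nodup
      rw [q.support_eq_cons, c.support_eq_cons, List.map_cons] at hs
      have h5 := congrArg List.tail hs
      simp only [List.tail_cons] at h5
      rw [← h5] at h2
      exact h2.of_map
end
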